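/- Let n ≥ 2 and let μ be the uniform (rotation-invariant) probability measure on the unit sphere in EuclideanSpace ℝ (Fin (2n)). Then the pushforward of μ under the edgelength map x ↦ 2·(x₀² + x₁²) (where x₀, x₁ are the first two coordinates of x) is the probability measure on ℝ with density y ↦ ((n−1)/2^{n−1}) · (2−y)^{n−2} on the interval [0,2] (and density 0 outside [0,2]) with respect to Lebesgue measure. -/

import Mathlib

set_option linter.unusedSectionVars false
set_option linter.unusedVariables false

open MeasureTheory Real Finset
open scoped NNReal ENNReal

namespace EdgeArmAux

variable {N : ℕ}

/-- rotation in the (i,j) coordinate plane -/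
noncomputable def rotFun (θ : ℝ) (i j : Fin N) (x : EuclideanSpace ℝ (Fin N)) :
    EuclideanSpace ℝ (Fin N) :=
  WithLp.toLp 2 fun m => if m = i then Real.cos θ * x i - Real.sin θ * x j
           else if m = j then Real.sin θ * x i + Real.cos θ * x j else x m

lemma rotFun_apply_i (θ : ℝ) {i j : Fin N} (x : EuclideanSpace ℝ (Fin N)) :
    rotFun θ i j x i = Real.cos θ * x i - Real.sin θ * x j := by simp [rotFun]

lemma rotFun_apply_j (θ : ℝ) {i j : Fin N} (hij : i ≠ j) (x : EuclideanSpace ℝ (Fin N)) :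
    rotFun θ i j x j = Real.sin θ * x i + Real.cos θ * x j := by simp [rotFun, hij.symm]

lemma rotFun_apply_other (θ : ℝ) {i j m : Fin N} (hmi : m ≠ i) (hmj : m ≠ j)
    (x : EuclideanSpace ℝ (Fin N)) : rotFun θ i j x m = x m := by simp [rotFun, hmi, hmj]

lemma rotFun_rotFun (θ : ℝ) {i j : Fin N} (hij : i ≠ j) (x : EuclideanSpace ℝ (Fin N)) :
    rotFun (-θ) i j (rotFun θ i j x) = x := by
  have hpyth := Real.sin_sq_add_cos_sq θ
  ext m
  by_cases hmi : m = i
  · subst hmi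
    rw [rotFun_apply_i, rotFun_apply_i, rotFun_apply_j _ hij, Real.cos_neg, Real.sin_neg]
    linear_combination (x m) * hpyth
  · by_cases hmj : m = j
    · subst hmj
      rw [rotFun_apply_j _ hij, rotFun_apply_i, rotFun_apply_j _ hij, Real.cos_neg, Real.sin_neg]
      linear_combination (x m) * hpyth
    · rw [rotFun_apply_other _ hmi hmj, rotFun_apply_other _ hmi hmj]

lemma sum_sq_rotFun (θ : ℝ) {i j : Fin N} (hij : i ≠ j) (x : EuclideanSpace ℝ (Fin N)) :
    ∑ m, (rotFun θ i j x m) ^ 2 = ∑ m, (x m) ^ 2 := by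
  classical
  have hi : i ∈ (univ : Finset (Fin N)) := mem_univ i
  have hj : j ∈ (univ : Finset (Fin N)).erase i := by
    simp [Finset.mem_erase, hij.symm]
  rw [← Finset.add_sum_erase _ _ hi, ← Finset.add_sum_erase _ _ hj,
    ← Finset.add_sum_erase _ (fun m => (x m)^2) hi, ← Finset.add_sum_erase _ (fun m => (x m)^2) hj]
  have hrest : ∑ m ∈ ((univ : Finset (Fin N)).erase i).erase j, (rotFun θ i j x m) ^ 2
      = ∑ m ∈ ((univ : Finset (Fin N)).erase i).erase j, (x m) ^ 2 := by
    refine Finset.sum_congr rfl fun m hm => ?_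
    have hmj : m ≠ j := (Finset.mem_erase.mp hm).1
    have hmi : m ≠ i := (Finset.mem_erase.mp (Finset.mem_erase.mp hm).2).1
    rw [rotFun_apply_other _ hmi hmj]
  rw [hrest, rotFun_apply_i, rotFun_apply_j _ hij]
  have hpyth := Real.sin_sq_add_cos_sq θ
  linear_combination (x i ^ 2 + x j ^ 2) * hpyth

/-- rotation in the (i,j)-plane as a linear isometry equivalence -/
noncomputable def rot (θ : ℝ) (i j : Fin N) (hij : i ≠ j) :
    EuclideanSpace ℝ (Fin N) ≃ₗᵢ[ℝ] EuclideanSpace ℝ (Fin N) where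
  toFun := rotFun θ i j
  invFun := rotFun (-θ) i j
  map_add' x y := by
    ext m
    by_cases hmi : m = i
    · subst hmi
      simp only [PiLp.add_apply, rotFun_apply_i]
      ring
    · by_cases hmj : m = j
      · subst hmj
        simp only [PiLp.add_apply, rotFun_apply_j _ hij]
        ring
      · simp only [PiLp.add_apply, rotFun_apply_other _ hmi hmj]
  map_smul' c x := by
    ext m
    by_cases hmi : m = i
    · subst hmi
      simp only [PiLp.smul_apply, rotFun_apply_i, smul_eq_mul, RingHom.id_apply]
      ring
    · by_cases hmj : m = j
      · subst hmj
        simp only [PiLp.smul_apply, rotFun_apply_j _ hij, smul_eq_mul, RingHom.id_apply]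
        ring
      · simp only [PiLp.smul_apply, rotFun_apply_other _ hmi hmj, smul_eq_mul, RingHom.id_apply]
  left_inv x := rotFun_rotFun θ hij x
  right_inv x := by
    have := rotFun_rotFun (-θ) hij x
    rwa [neg_neg] at this
  norm_map' x := by
    rw [EuclideanSpace.norm_eq, EuclideanSpace.norm_eq]
    congr 1
    simpa [Real.norm_eq_abs, sq_abs] using sum_sq_rotFun θ hij x

lemma rot_apply (θ : ℝ) {i j : Fin N} (hij : i ≠ j) (x : EuclideanSpace ℝ (Fin N)) :
    rot θ i j hij x = rotFun θ i j x := rfl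

variable {N : ℕ} {μ : Measure (EuclideanSpace ℝ (Fin N))} [IsProbabilityMeasure μ]

lemma ae_norm_one (hsphere : μ (Metric.sphere (0 : EuclideanSpace ℝ (Fin N)) 1) = 1) :
    ∀ᵐ x ∂μ, ‖x‖ = 1 := by
  have hms : MeasurableSet (Metric.sphere (0 : EuclideanSpace ℝ (Fin N)) 1) :=
    Metric.isClosed_sphere.measurableSet
  have h0 : μ (Metric.sphere (0 : EuclideanSpace ℝ (Fin N)) 1)ᶜ = 0 := by
    rw [prob_compl_eq_zero_iff hms]; exact hsphere
  rw [ae_iff]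
  refine measure_mono_null ?_ h0
  intro x hx
  exact fun hs => hx (mem_sphere_zero_iff_norm.mp hs)

lemma norm_sq_eq (x : EuclideanSpace ℝ (Fin N)) : ‖x‖ ^ 2 = ∑ i, x i ^ 2 := by
  rw [EuclideanSpace.norm_eq, Real.sq_sqrt]
  · simp [Real.norm_eq_abs, sq_abs]
  · positivity

lemma coord_sq_le {x : EuclideanSpace ℝ (Fin N)} (hx : ‖x‖ = 1) (i : Fin N) : x i ^ 2 ≤ 1 := by
  have h : x i ^ 2 ≤ ∑ j, x j ^ 2 :=
    Finset.single_le_sum (fun j _ => sq_nonneg (x j)) (mem_univ i)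
  rw [← norm_sq_eq, hx] at h; simpa using h

lemma integrable_of_bound {g : EuclideanSpace ℝ (Fin N) → ℝ}
    (hae : ∀ᵐ x ∂μ, ‖x‖ = 1) (hg : AEStronglyMeasurable g μ) (C : ℝ)
    (hb : ∀ x, ‖x‖ = 1 → |g x| ≤ C) : Integrable g μ :=
  (integrable_const C).mono' hg (hae.mono fun x hx => by
    simpa [Real.norm_eq_abs] using hb x hx)

omit [IsProbabilityMeasure μ] in
lemma integral_comp_iso {O : EuclideanSpace ℝ (Fin N) ≃ₗᵢ[ℝ] EuclideanSpace ℝ (Fin N)}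
    (hO : Measure.map (fun x => O x) μ = μ) {g : EuclideanSpace ℝ (Fin N) → ℝ}
    (hg : AEStronglyMeasurable g μ) : ∫ x, g (O x) ∂μ = ∫ x, g x ∂μ := by
  conv_rhs => rw [← hO]
  exact (integral_map O.continuous.aemeasurable (by rwa [hO])).symm

noncomputable def swapIso (i j : Fin N) :
    EuclideanSpace ℝ (Fin N) ≃ₗᵢ[ℝ] EuclideanSpace ℝ (Fin N) :=
  LinearIsometryEquiv.piLpCongrLeft 2 ℝ ℝ (Equiv.swap i j)

lemma swapIso_apply (i j : Fin N) (x : EuclideanSpace ℝ (Fin N)) (m : Fin N) :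
    swapIso i j x m = x (Equiv.swap i j m) := by
  simp [swapIso, LinearIsometryEquiv.piLpCongrLeft_apply, Equiv.piCongrLeft'_apply]

lemma continuous_coord (i : Fin N) : Continuous fun x : EuclideanSpace ℝ (Fin N) => x i :=
  (EuclideanSpace.proj (𝕜 := ℝ) i).continuous


section Moments

variable {i0 i1 i2 : Fin N}

/-- the squared norm of the first two coordinates -/
noncomputable def sfun (i0 i1 : Fin N) (x : EuclideanSpace ℝ (Fin N)) : ℝ :=
  x i0 ^ 2 + x i1 ^ 2

lemma continuous_sfun : Continuous (sfun i0 i1) :=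
  ((continuous_coord i0).pow 2).add ((continuous_coord i1).pow 2)

lemma sfun_nonneg (x : EuclideanSpace ℝ (Fin N)) : 0 ≤ sfun i0 i1 x := by
  unfold sfun; positivity

lemma sfun_le_two {x : EuclideanSpace ℝ (Fin N)} (hx : ‖x‖ = 1) : sfun i0 i1 x ≤ 2 := by
  have h1 := coord_sq_le hx i0
  have h2 := coord_sq_le hx i1
  unfold sfun; linarith

lemma sfun_pow_le {x : EuclideanSpace ℝ (Fin N)} (hx : ‖x‖ = 1) (k : ℕ) :
    sfun i0 i1 x ^ k ≤ 2 ^ k :=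
  pow_le_pow_left₀ (sfun_nonneg x) (sfun_le_two hx) k

variable (hae : ∀ᵐ x ∂μ, ‖x‖ = 1)
include hae

lemma int_s_pow (k : ℕ) : Integrable (fun x => sfun i0 i1 x ^ k) μ := by
  refine integrable_of_bound hae ((continuous_sfun.pow k).aestronglyMeasurable) (2 ^ k) ?_
  intro x hx
  rw [abs_of_nonneg (pow_nonneg (sfun_nonneg x) k)]
  exact sfun_pow_le hx k

lemma int_coord_mul (k : ℕ) (i : Fin N) :
    Integrable (fun x => x i ^ 2 * sfun i0 i1 x ^ k) μ := by
  refine integrable_of_bound hae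
    (((continuous_coord i).pow 2).mul (continuous_sfun.pow k)).aestronglyMeasurable (2 ^ k) ?_
  intro x hx
  rw [abs_of_nonneg (mul_nonneg (sq_nonneg _) (pow_nonneg (sfun_nonneg x) k))]
  have h1 := coord_sq_le hx i
  have h2 := sfun_pow_le (i0 := i0) (i1 := i1) hx k
  nlinarith [sq_nonneg (x i), pow_nonneg (sfun_nonneg (i0 := i0) (i1 := i1) x) k]

lemma int_coord2_mul (k : ℕ) (i j : Fin N) :
    Integrable (fun x => x i ^ 2 * (x j ^ 2 * sfun i0 i1 x ^ k)) μ := by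
  refine integrable_of_bound hae
    (((continuous_coord i).pow 2).mul
      (((continuous_coord j).pow 2).mul (continuous_sfun.pow k))).aestronglyMeasurable (2 ^ k) ?_
  intro x hx
  have hodd : (0:ℝ) ≤ sfun i0 i1 x ^ k := pow_nonneg (sfun_nonneg x) k
  rw [abs_of_nonneg (mul_nonneg (sq_nonneg _) (mul_nonneg (sq_nonneg _) hodd))]
  have h1 := coord_sq_le hx i
  have h3 := coord_sq_le hx j
  have h2 := sfun_pow_le (i0 := i0) (i1 := i1) hx k
  have hA : x j ^ 2 * sfun i0 i1 x ^ k ≤ 2 ^ k := by nlinarith [sq_nonneg (x j)]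
  nlinarith [mul_nonneg (sq_nonneg (x j)) hodd, sq_nonneg (x i)]

variable (hinv : ∀ O : EuclideanSpace ℝ (Fin N) ≃ₗᵢ[ℝ] EuclideanSpace ℝ (Fin N),
  Measure.map (fun x => O x) μ = μ)
include hinv

lemma swap01 (h01 : i0 ≠ i1) (k : ℕ) :
    ∫ x, x i0 ^ 2 * sfun i0 i1 x ^ k ∂μ = ∫ x, x i1 ^ 2 * sfun i0 i1 x ^ k ∂μ := by
  have hg : AEStronglyMeasurable (fun x => x i1 ^ 2 * sfun i0 i1 x ^ k) μ :=
    (((continuous_coord i1).pow 2).mul (continuous_sfun.pow k)).aestronglyMeasurable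
  have h := integral_comp_iso (hinv (swapIso i0 i1)) hg
  rw [← h]
  congr 1
  funext x
  have e0 : swapIso i0 i1 x i0 = x i1 := by
    rw [swapIso_apply, Equiv.swap_apply_left]
  have e1 : swapIso i0 i1 x i1 = x i0 := by
    rw [swapIso_apply, Equiv.swap_apply_right]
  simp only [sfun, e0, e1]
  ring

lemma two_mul_coord (h01 : i0 ≠ i1) (k : ℕ) :
    2 * ∫ x, x i1 ^ 2 * sfun i0 i1 x ^ k ∂μ = ∫ x, sfun i0 i1 x ^ (k + 1) ∂μ := by
  have hsplit : ∫ x, sfun i0 i1 x ^ (k + 1) ∂μ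
      = ∫ x, (x i0 ^ 2 * sfun i0 i1 x ^ k + x i1 ^ 2 * sfun i0 i1 x ^ k) ∂μ := by
    congr 1
    funext x
    rw [pow_succ]
    unfold sfun
    ring
  rw [hsplit, integral_add (int_coord_mul hae k i0) (int_coord_mul hae k i1),
    swap01 hae hinv h01 k]
  ring

/-- swapping two coordinates different from `i0, i1`, possibly with a weight -/
lemma swap_other (h01 : i0 ≠ i1) {i j : Fin N} (hi0 : i ≠ i0) (hi1 : i ≠ i1)
    (hj0 : j ≠ i0) (hj1 : j ≠ i1) (e : ℕ) (k : ℕ) :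
    ∫ x, x i1 ^ (2 * e) * (x i ^ 2 * sfun i0 i1 x ^ k) ∂μ
    = ∫ x, x i1 ^ (2 * e) * (x j ^ 2 * sfun i0 i1 x ^ k) ∂μ := by
  have hg : AEStronglyMeasurable (fun x => x i1 ^ (2*e) * (x j ^ 2 * sfun i0 i1 x ^ k)) μ :=
    (((continuous_coord i1).pow (2*e)).mul
      (((continuous_coord j).pow 2).mul (continuous_sfun.pow k))).aestronglyMeasurable
  have h := integral_comp_iso (hinv (swapIso i j)) hg
  rw [← h]
  congr 1
  funext x
  have e0 : swapIso i j x i0 = x i0 := by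
    rw [swapIso_apply, Equiv.swap_apply_of_ne_of_ne hi0.symm hj0.symm]
  have e1 : swapIso i j x i1 = x i1 := by
    rw [swapIso_apply, Equiv.swap_apply_of_ne_of_ne hi1.symm hj1.symm]
  have ej : swapIso i j x j = x i := by
    rw [swapIso_apply, Equiv.swap_apply_right]
  simp only [sfun, e0, e1, ej]

omit hae hinv in
lemma sum_other_sq (h01 : i0 ≠ i1) {x : EuclideanSpace ℝ (Fin N)} (hx : ‖x‖ = 1) :
    ∑ i ∈ univ \ {i0, i1}, x i ^ 2 = 1 - sfun i0 i1 x := by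
  have hsub : ({i0, i1} : Finset (Fin N)) ⊆ univ := subset_univ _
  have := Finset.sum_sdiff_eq_sub (f := fun i => x i ^ 2) hsub
  rw [this, Finset.sum_pair h01]
  have htot : ∑ i, x i ^ 2 = 1 := by rw [← norm_sq_eq, hx]; norm_num
  rw [htot]
  unfold sfun
  ring

/-- all the "other-coordinate" integrals are equal, so they sum to `(N-2)` times one of them -/
lemma sum_eq_card (h01 : i0 ≠ i1) (h20 : i2 ≠ i0) (h21 : i2 ≠ i1) (e k : ℕ) (hN : 2 ≤ N) :
    ∫ x, x i1 ^ (2 * e) * ((1 - sfun i0 i1 x) * sfun i0 i1 x ^ k) ∂μ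
    = ((N : ℝ) - 2) * ∫ x, x i1 ^ (2 * e) * (x i2 ^ 2 * sfun i0 i1 x ^ k) ∂μ := by
  classical
  have hint : ∀ i : Fin N, Integrable (fun x => x i1 ^ (2*e) * (x i ^ 2 * sfun i0 i1 x ^ k)) μ := by
    intro i
    refine integrable_of_bound hae
      (((continuous_coord i1).pow (2*e)).mul
        (((continuous_coord i).pow 2).mul (continuous_sfun.pow k))).aestronglyMeasurable
      (2 ^ k) ?_
    intro x hx
    have hodd : (0:ℝ) ≤ sfun i0 i1 x ^ k := pow_nonneg (sfun_nonneg x) k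
    have hev : (0:ℝ) ≤ x i1 ^ (2*e) := by
      rw [pow_mul]; exact pow_nonneg (sq_nonneg _) e
    rw [abs_of_nonneg (mul_nonneg hev (mul_nonneg (sq_nonneg _) hodd))]
    have h1 := coord_sq_le hx i
    have h2 := sfun_pow_le (i0 := i0) (i1 := i1) hx k
    have h3 : x i1 ^ (2*e) ≤ 1 := by
      rw [pow_mul]
      exact pow_le_one₀ (sq_nonneg _) (coord_sq_le hx i1)
    have hA : x i ^ 2 * sfun i0 i1 x ^ k ≤ 2 ^ k := by nlinarith [sq_nonneg (x i)]
    nlinarith [mul_nonneg (sq_nonneg (x i)) hodd]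
  -- step 1: rewrite the LHS integrand using the a.e. identity
  have hLHS : ∫ x, x i1 ^ (2*e) * ((1 - sfun i0 i1 x) * sfun i0 i1 x ^ k) ∂μ
      = ∫ x, ∑ i ∈ univ \ {i0, i1}, x i1 ^ (2*e) * (x i ^ 2 * sfun i0 i1 x ^ k) ∂μ := by
    refine integral_congr_ae (hae.mono fun x hx => ?_)
    simp only
    rw [← Finset.mul_sum, ← Finset.sum_mul, sum_other_sq h01 hx]
  rw [hLHS, integral_finset_sum _ (fun i _ => hint i)]
  have hall : ∀ i ∈ univ \ ({i0, i1} : Finset (Fin N)),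
      ∫ x, x i1 ^ (2*e) * (x i ^ 2 * sfun i0 i1 x ^ k) ∂μ
      = ∫ x, x i1 ^ (2*e) * (x i2 ^ 2 * sfun i0 i1 x ^ k) ∂μ := by
    intro i hi
    rw [Finset.mem_sdiff, Finset.mem_insert, Finset.mem_singleton] at hi
    push_neg at hi
    exact swap_other hae hinv h01 hi.2.1 hi.2.2 h20 h21 e k
  rw [Finset.sum_congr rfl hall, Finset.sum_const, nsmul_eq_mul]
  congr 1
  rw [Finset.card_sdiff_of_subset (subset_univ _), Finset.card_univ, Fintype.card_fin,
    Finset.card_pair h01]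
  push_cast [Nat.cast_sub hN]
  ring

end Moments

section Deriv

variable (i0 i1 i2 : Fin N)

noncomputable def Af (θ : ℝ) (x : EuclideanSpace ℝ (Fin N)) : ℝ :=
  Real.cos θ * x i1 - Real.sin θ * x i2

noncomputable def Bf (θ : ℝ) (x : EuclideanSpace ℝ (Fin N)) : ℝ :=
  Real.sin θ * x i1 + Real.cos θ * x i2

noncomputable def Sf (θ : ℝ) (x : EuclideanSpace ℝ (Fin N)) : ℝ :=
  x i0 ^ 2 + (Af i1 i2 θ x) ^ 2

noncomputable def Ff (k : ℕ) (θ : ℝ) (x : EuclideanSpace ℝ (Fin N)) : ℝ :=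
  Af i1 i2 θ x * Bf i1 i2 θ x * Sf i0 i1 i2 θ x ^ k

noncomputable def Df (k : ℕ) (θ : ℝ) (x : EuclideanSpace ℝ (Fin N)) : ℝ :=
  (Af i1 i2 θ x ^ 2 - Bf i1 i2 θ x ^ 2) * Sf i0 i1 i2 θ x ^ k
    - 2 * k * (Af i1 i2 θ x ^ 2 * (Bf i1 i2 θ x ^ 2 * Sf i0 i1 i2 θ x ^ (k - 1)))

lemma Af_zero (x : EuclideanSpace ℝ (Fin N)) : Af i1 i2 0 x = x i1 := by simp [Af]

lemma Bf_zero (x : EuclideanSpace ℝ (Fin N)) : Bf i1 i2 0 x = x i2 := by simp [Bf]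

lemma Sf_zero (x : EuclideanSpace ℝ (Fin N)) : Sf i0 i1 i2 0 x = sfun i0 i1 x := by
  simp [Sf, sfun, Af]

lemma continuous_Af (θ : ℝ) : Continuous (Af i1 i2 θ (N := N)) :=
  ((continuous_const.mul (continuous_coord i1)).sub (continuous_const.mul (continuous_coord i2)))

lemma continuous_Bf (θ : ℝ) : Continuous (Bf i1 i2 θ (N := N)) :=
  ((continuous_const.mul (continuous_coord i1)).add (continuous_const.mul (continuous_coord i2)))

lemma continuous_Sf (θ : ℝ) : Continuous (Sf i0 i1 i2 θ (N := N)) :=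
  ((continuous_coord i0).pow 2).add ((continuous_Af i1 i2 θ).pow 2)

lemma continuous_Ff (k : ℕ) (θ : ℝ) : Continuous (Ff i0 i1 i2 k θ (N := N)) :=
  ((continuous_Af i1 i2 θ).mul (continuous_Bf i1 i2 θ)).mul ((continuous_Sf i0 i1 i2 θ).pow k)

lemma continuous_Df (k : ℕ) (θ : ℝ) : Continuous (Df i0 i1 i2 k θ (N := N)) :=
  ((((continuous_Af i1 i2 θ).pow 2).sub ((continuous_Bf i1 i2 θ).pow 2)).mul
    ((continuous_Sf i0 i1 i2 θ).pow k)).sub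
    (continuous_const.mul (((continuous_Af i1 i2 θ).pow 2).mul
      (((continuous_Bf i1 i2 θ).pow 2).mul ((continuous_Sf i0 i1 i2 θ).pow (k-1)))))

lemma hasDerivAt_Ff (k : ℕ) (θ : ℝ) (x : EuclideanSpace ℝ (Fin N)) :
    HasDerivAt (fun θ => Ff i0 i1 i2 k θ x) (Df i0 i1 i2 k θ x) θ := by
  have hA : HasDerivAt (fun θ => Af i1 i2 θ x) (-(Bf i1 i2 θ x)) θ := by
    have h := ((Real.hasDerivAt_cos θ).mul_const (x i1)).sub
      ((Real.hasDerivAt_sin θ).mul_const (x i2))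
    refine h.congr_deriv ?_
    unfold Bf
    ring
  have hB : HasDerivAt (fun θ => Bf i1 i2 θ x) (Af i1 i2 θ x) θ := by
    have h := ((Real.hasDerivAt_sin θ).mul_const (x i1)).add
      ((Real.hasDerivAt_cos θ).mul_const (x i2))
    refine h.congr_deriv ?_
    unfold Af
    ring
  have hS : HasDerivAt (fun θ => Sf i0 i1 i2 θ x)
      ((2 : ℕ) * Af i1 i2 θ x ^ (2 - 1) * -(Bf i1 i2 θ x)) θ := (hA.pow 2).const_add _
  have hSk := hS.pow k
  have hF := (hA.mul hB).mul hSk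
  refine hF.congr_deriv ?_
  unfold Df
  push_cast
  simp only [Pi.mul_apply, Pi.pow_apply]
  ring

lemma coord_abs_le {x : EuclideanSpace ℝ (Fin N)} (hx : ‖x‖ = 1) (i : Fin N) : |x i| ≤ 1 := by
  nlinarith [coord_sq_le hx i, abs_nonneg (x i), sq_abs (x i)]

lemma Af_abs_le (θ : ℝ) {x : EuclideanSpace ℝ (Fin N)} (hx : ‖x‖ = 1) : |Af i1 i2 θ x| ≤ 2 := by
  unfold Af
  calc |Real.cos θ * x i1 - Real.sin θ * x i2|
      ≤ |Real.cos θ * x i1| + |Real.sin θ * x i2| := abs_sub _ _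
    _ = |Real.cos θ| * |x i1| + |Real.sin θ| * |x i2| := by rw [abs_mul, abs_mul]
    _ ≤ 1 * 1 + 1 * 1 := by
        gcongr <;> first
          | exact Real.abs_cos_le_one θ
          | exact Real.abs_sin_le_one θ
          | exact coord_abs_le hx _
    _ = 2 := by norm_num

lemma Bf_abs_le (θ : ℝ) {x : EuclideanSpace ℝ (Fin N)} (hx : ‖x‖ = 1) : |Bf i1 i2 θ x| ≤ 2 := by
  unfold Bf
  calc |Real.sin θ * x i1 + Real.cos θ * x i2|
      ≤ |Real.sin θ * x i1| + |Real.cos θ * x i2| := abs_add_le _ _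
    _ = |Real.sin θ| * |x i1| + |Real.cos θ| * |x i2| := by rw [abs_mul, abs_mul]
    _ ≤ 1 * 1 + 1 * 1 := by
        gcongr <;> first
          | exact Real.abs_cos_le_one θ
          | exact Real.abs_sin_le_one θ
          | exact coord_abs_le hx _
    _ = 2 := by norm_num

lemma Sf_nonneg (θ : ℝ) (x : EuclideanSpace ℝ (Fin N)) : 0 ≤ Sf i0 i1 i2 θ x := by
  unfold Sf; positivity

lemma Sf_le_five (θ : ℝ) {x : EuclideanSpace ℝ (Fin N)} (hx : ‖x‖ = 1) :
    Sf i0 i1 i2 θ x ≤ 5 := by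
  have h0 := coord_sq_le hx i0
  have hA := Af_abs_le i1 i2 θ hx
  have : Af i1 i2 θ x ^ 2 ≤ 4 := by nlinarith [sq_abs (Af i1 i2 θ x), abs_nonneg (Af i1 i2 θ x)]
  unfold Sf
  linarith

lemma Df_abs_le (k : ℕ) (θ : ℝ) {x : EuclideanSpace ℝ (Fin N)} (hx : ‖x‖ = 1) :
    |Df i0 i1 i2 k θ x| ≤ (8 + 32 * (k:ℝ)) * 5 ^ k := by
  have hA := Af_abs_le i1 i2 θ hx
  have hB := Bf_abs_le i1 i2 θ hx
  have hA2 : Af i1 i2 θ x ^ 2 ≤ 4 := by nlinarith [sq_abs (Af i1 i2 θ x), abs_nonneg (Af i1 i2 θ x)]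
  have hB2 : Bf i1 i2 θ x ^ 2 ≤ 4 := by nlinarith [sq_abs (Bf i1 i2 θ x), abs_nonneg (Bf i1 i2 θ x)]
  have hS0 := Sf_nonneg i0 i1 i2 θ x
  have hS5 := Sf_le_five i0 i1 i2 θ hx
  have hSk : Sf i0 i1 i2 θ x ^ k ≤ 5 ^ k := pow_le_pow_left₀ hS0 hS5 k
  have hSk1 : Sf i0 i1 i2 θ x ^ (k - 1) ≤ 5 ^ k := by
    calc Sf i0 i1 i2 θ x ^ (k-1) ≤ 5 ^ (k-1) := pow_le_pow_left₀ hS0 hS5 _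
      _ ≤ 5 ^ k := pow_le_pow_right₀ (by norm_num) (Nat.sub_le k 1)
  have hSknn : (0:ℝ) ≤ Sf i0 i1 i2 θ x ^ k := pow_nonneg hS0 k
  have hSk1nn : (0:ℝ) ≤ Sf i0 i1 i2 θ x ^ (k-1) := pow_nonneg hS0 _
  unfold Df
  have habs1 : |(Af i1 i2 θ x ^ 2 - Bf i1 i2 θ x ^ 2) * Sf i0 i1 i2 θ x ^ k| ≤ 8 * 5 ^ k := by
    rw [abs_mul]
    have h1 : |Af i1 i2 θ x ^ 2 - Bf i1 i2 θ x ^ 2| ≤ 8 := by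
      rw [abs_le]
      constructor <;> nlinarith [sq_nonneg (Af i1 i2 θ x), sq_nonneg (Bf i1 i2 θ x)]
    have h2 : |Sf i0 i1 i2 θ x ^ k| ≤ 5 ^ k := by rwa [abs_of_nonneg hSknn]
    exact mul_le_mul h1 h2 (abs_nonneg _) (by norm_num)
  have habs2 : |2 * (k:ℝ) * (Af i1 i2 θ x ^ 2 * (Bf i1 i2 θ x ^ 2 * Sf i0 i1 i2 θ x ^ (k-1)))|
      ≤ 32 * (k:ℝ) * 5 ^ k := by
    rw [abs_mul, abs_mul, abs_mul]
    have e2 : |(2:ℝ)| = 2 := by norm_num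
    have ek : |(k:ℝ)| = k := abs_of_nonneg (Nat.cast_nonneg k)
    have eA : |Af i1 i2 θ x ^ 2| ≤ 4 := by rwa [abs_of_nonneg (sq_nonneg _)]
    have eB : |Bf i1 i2 θ x ^ 2| ≤ 4 := by rwa [abs_of_nonneg (sq_nonneg _)]
    have eS : |Sf i0 i1 i2 θ x ^ (k-1)| ≤ 5 ^ k := by rwa [abs_of_nonneg hSk1nn]
    rw [e2, ek]
    have eBS : |Bf i1 i2 θ x ^ 2 * Sf i0 i1 i2 θ x ^ (k-1)| ≤ 4 * 5 ^ k := by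
      rw [abs_mul]
      exact mul_le_mul eB eS (abs_nonneg _) (by norm_num)
    have hX : |Af i1 i2 θ x ^ 2| * |Bf i1 i2 θ x ^ 2 * Sf i0 i1 i2 θ x ^ (k-1)|
        ≤ 4 * (4 * 5 ^ k) :=
      mul_le_mul eA eBS (abs_nonneg _) (by norm_num)
    have hmul := mul_le_mul_of_nonneg_left hX (show (0:ℝ) ≤ 2 * (k:ℝ) by positivity)
    nlinarith [hmul]
  have htri := abs_sub ((Af i1 i2 θ x ^ 2 - Bf i1 i2 θ x ^ 2) * Sf i0 i1 i2 θ x ^ k)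
    (2 * (k:ℝ) * (Af i1 i2 θ x ^ 2 * (Bf i1 i2 θ x ^ 2 * Sf i0 i1 i2 θ x ^ (k-1))))
  have hring : (8 + 32 * (k:ℝ)) * 5 ^ k = 8 * 5 ^ k + 32 * (k:ℝ) * 5 ^ k := by ring
  linarith [habs1, habs2, htri]

lemma Ff_abs_le (k : ℕ) (θ : ℝ) {x : EuclideanSpace ℝ (Fin N)} (hx : ‖x‖ = 1) :
    |Ff i0 i1 i2 k θ x| ≤ 4 * 5 ^ k := by
  have hA := Af_abs_le i1 i2 θ hx
  have hB := Bf_abs_le i1 i2 θ hx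
  have hS0 := Sf_nonneg i0 i1 i2 θ x
  have hSk : Sf i0 i1 i2 θ x ^ k ≤ 5 ^ k := pow_le_pow_left₀ hS0 (Sf_le_five i0 i1 i2 θ hx) k
  have hSabs : |Sf i0 i1 i2 θ x ^ k| ≤ 5 ^ k := by rwa [abs_of_nonneg (pow_nonneg hS0 k)]
  unfold Ff
  rw [abs_mul, abs_mul]
  have h1 : |Af i1 i2 θ x| * |Bf i1 i2 θ x| ≤ 2 * 2 :=
    mul_le_mul hA hB (abs_nonneg _) (by norm_num)
  have := mul_le_mul h1 hSabs (abs_nonneg _) (by norm_num : (0:ℝ) ≤ 2 * 2)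
  linarith

section DerivRel

variable {i0 i1 i2 : Fin N}

lemma deriv_relation (hae : ∀ᵐ x ∂μ, ‖x‖ = 1)
    (hinv : ∀ O : EuclideanSpace ℝ (Fin N) ≃ₗᵢ[ℝ] EuclideanSpace ℝ (Fin N),
      Measure.map (fun x => O x) μ = μ)
    (h10 : i1 ≠ i0) (h12 : i1 ≠ i2) (h20 : i2 ≠ i0) (k : ℕ) :
    ∫ x, x i1 ^ 2 * sfun i0 i1 x ^ k ∂μ
      = ∫ x, x i2 ^ 2 * sfun i0 i1 x ^ k ∂μ
        + 2 * k * ∫ x, x i1 ^ 2 * (x i2 ^ 2 * sfun i0 i1 x ^ (k - 1)) ∂μ := by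
  classical
  set g : EuclideanSpace ℝ (Fin N) → ℝ := fun y => y i1 * y i2 * sfun i0 i1 y ^ k with hgdef
  have hgcont : Continuous g :=
    ((continuous_coord i1).mul (continuous_coord i2)).mul (continuous_sfun.pow k)
  have hFg : ∀ θ x, Ff i0 i1 i2 k θ x = g (rot θ i1 i2 h12 x) := by
    intro θ x
    have e1 : rot θ i1 i2 h12 x i1 = Af i1 i2 θ x := by
      rw [rot_apply, rotFun_apply_i]; rfl
    have e2 : rot θ i1 i2 h12 x i2 = Bf i1 i2 θ x := by
      rw [rot_apply, rotFun_apply_j _ h12]; rfl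
    have e0 : rot θ i1 i2 h12 x i0 = x i0 := by
      rw [rot_apply, rotFun_apply_other _ h10.symm h20.symm]
    simp only [hgdef, sfun, e0, e1, e2]
    rfl
  have hconst : ∀ θ, ∫ x, Ff i0 i1 i2 k θ x ∂μ = ∫ x, g x ∂μ := by
    intro θ
    have h1 : ∫ x, Ff i0 i1 i2 k θ x ∂μ = ∫ x, g (rot θ i1 i2 h12 x) ∂μ :=
      integral_congr_ae (Filter.Eventually.of_forall fun x => hFg θ x)
    rw [h1]
    exact integral_comp_iso (hinv (rot θ i1 i2 h12)) hgcont.aestronglyMeasurable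
  have hder : HasDerivAt (fun θ => ∫ x, Ff i0 i1 i2 k θ x ∂μ)
      (∫ x, Df i0 i1 i2 k 0 x ∂μ) 0 := by
    refine (hasDerivAt_integral_of_dominated_loc_of_deriv_le
      (F := fun θ x => Ff i0 i1 i2 k θ x) (F' := fun θ x => Df i0 i1 i2 k θ x)
      (x₀ := (0:ℝ)) (bound := fun _ => (8 + 32 * (k:ℝ)) * 5 ^ k) (s := Metric.ball 0 1) (Metric.ball_mem_nhds _ one_pos)
      ?_ ?_ ?_ ?_ ?_ ?_).2
    · exact Filter.Eventually.of_forall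
        fun θ => (continuous_Ff i0 i1 i2 k θ).aestronglyMeasurable
    · refine integrable_of_bound hae (continuous_Ff i0 i1 i2 k 0).aestronglyMeasurable
        (4 * 5 ^ k) ?_
      exact fun x hx => Ff_abs_le i0 i1 i2 k 0 hx
    · exact (continuous_Df i0 i1 i2 k 0).aestronglyMeasurable
    · exact hae.mono fun x hx θ _ => by
        simpa [Real.norm_eq_abs] using Df_abs_le i0 i1 i2 k θ hx
    · exact integrable_const _
    · exact Filter.Eventually.of_forall fun x θ _ => hasDerivAt_Ff i0 i1 i2 k θ x
  have hfun : (fun θ => ∫ x, Ff i0 i1 i2 k θ x ∂μ) = fun _ => ∫ x, g x ∂μ := funext hconst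
  rw [hfun] at hder
  have h0 : ∫ x, Df i0 i1 i2 k 0 x ∂μ = 0 := hder.unique (hasDerivAt_const _ _)
  have hD0 : ∀ x : EuclideanSpace ℝ (Fin N), Df i0 i1 i2 k 0 x
      = x i1 ^ 2 * sfun i0 i1 x ^ k - x i2 ^ 2 * sfun i0 i1 x ^ k
        - 2 * k * (x i1 ^ 2 * (x i2 ^ 2 * sfun i0 i1 x ^ (k - 1))) := by
    intro x
    unfold Df
    rw [Af_zero, Bf_zero, Sf_zero]
    ring
  have hsplit : ∫ x, Df i0 i1 i2 k 0 x ∂μ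
      = ∫ x, x i1 ^ 2 * sfun i0 i1 x ^ k ∂μ - ∫ x, x i2 ^ 2 * sfun i0 i1 x ^ k ∂μ
        - 2 * k * ∫ x, x i1 ^ 2 * (x i2 ^ 2 * sfun i0 i1 x ^ (k - 1)) ∂μ := by
    rw [integral_congr_ae (Filter.Eventually.of_forall hD0)]
    have hint1 : Integrable (fun a : EuclideanSpace ℝ (Fin N) =>
        a i1 ^ 2 * sfun i0 i1 a ^ k - a i2 ^ 2 * sfun i0 i1 a ^ k) μ :=
      (int_coord_mul hae k i1).sub (int_coord_mul hae k i2)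
    have hint3 : Integrable (fun a : EuclideanSpace ℝ (Fin N) =>
        2 * (k:ℝ) * (a i1 ^ 2 * (a i2 ^ 2 * sfun i0 i1 a ^ (k-1)))) μ :=
      (int_coord2_mul hae (k-1) i1 i2).const_mul _
    rw [integral_sub hint1 hint3,
      integral_sub (int_coord_mul hae k i1) (int_coord_mul hae k i2),
      MeasureTheory.integral_const_mul]
  rw [hsplit] at h0
  linarith

end DerivRel

end Deriv

section MomentRec

variable {i0 i1 i2 : Fin N}

lemma moment_rec (hae : ∀ᵐ x ∂μ, ‖x‖ = 1)
    (hinv : ∀ O : EuclideanSpace ℝ (Fin N) ≃ₗᵢ[ℝ] EuclideanSpace ℝ (Fin N),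
      Measure.map (fun x => O x) μ = μ)
    (h01 : i0 ≠ i1) (h12 : i1 ≠ i2) (h20 : i2 ≠ i0) (hN : 2 ≤ N) (k : ℕ) :
    ((N:ℝ) + 2 * k) * ∫ x, sfun i0 i1 x ^ (k+1) ∂μ
      = (2 * (k:ℝ) + 2) * ∫ x, sfun i0 i1 x ^ k ∂μ := by
  classical
  have h21 : i2 ≠ i1 := h12.symm
  have h10 : i1 ≠ i0 := h01.symm
  set Mk := ∫ x, sfun i0 i1 x ^ k ∂μ with hMk
  set Mk1 := ∫ x, sfun i0 i1 x ^ (k+1) ∂μ with hMk1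
  set I1 := ∫ x, x i1 ^ 2 * sfun i0 i1 x ^ k ∂μ with hI1
  set I2 := ∫ x, x i2 ^ 2 * sfun i0 i1 x ^ k ∂μ with hI2
  have E2 : 2 * I1 = Mk1 := two_mul_coord hae hinv h01 k
  have E3 : ((N:ℝ) - 2) * I2 = Mk - Mk1 := by
    have hs := sum_eq_card (i2 := i2) hae hinv h01 h20 h21 0 k hN
    simp only [mul_zero, pow_zero, one_mul] at hs
    have hsub : ∫ x, (1 - sfun i0 i1 x) * sfun i0 i1 x ^ k ∂μ = Mk - Mk1 := by
      have hptw : ∀ x : EuclideanSpace ℝ (Fin N), (1 - sfun i0 i1 x) * sfun i0 i1 x ^ k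
          = sfun i0 i1 x ^ k - sfun i0 i1 x ^ (k+1) := by
        intro x; rw [pow_succ]; ring
      rw [integral_congr_ae (Filter.Eventually.of_forall hptw),
        integral_sub (int_s_pow hae k) (int_s_pow hae (k+1))]
    rw [← hsub, hs]
  rcases Nat.eq_zero_or_pos k with hk0 | hkpos
  · subst hk0
    have E1 := deriv_relation hae hinv h10 h12 h20 0
    simp only [Nat.cast_zero, mul_zero, zero_mul, add_zero] at E1 ⊢
    rw [← hI1, ← hI2] at E1
    linear_combination (2*((N:ℝ)-2)) * E1 - ((N:ℝ)-2) * E2 + 2 * E3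
  · obtain ⟨j, rfl⟩ : ∃ j, k = j + 1 := ⟨k - 1, (Nat.succ_pred_eq_of_pos hkpos).symm⟩
    set I3 := ∫ x, x i1 ^ 2 * (x i2 ^ 2 * sfun i0 i1 x ^ j) ∂μ with hI3
    have E1 : I1 = I2 + 2 * ((j:ℝ)+1) * I3 := by
      have hd := deriv_relation hae hinv h10 h12 h20 (j+1)
      simp only [Nat.add_sub_cancel] at hd
      rw [← hI1, ← hI2, ← hI3] at hd
      push_cast at hd ⊢
      linarith
    have E4 : ((N:ℝ) - 2) * I3 = Mk / 2 - Mk1 / 2 := by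
      have hs := sum_eq_card (i2 := i2) hae hinv h01 h20 h21 1 j hN
      simp only [mul_one, pow_one] at hs
      have hJ1 : ∫ x, x i1 ^ 2 * sfun i0 i1 x ^ j ∂μ = Mk / 2 := by
        have h := two_mul_coord hae hinv h01 j
        rw [← hMk] at h
        linarith
      have hJ2 : ∫ x, x i1 ^ 2 * sfun i0 i1 x ^ (j+1) ∂μ = Mk1 / 2 := by
        have h := two_mul_coord hae hinv h01 (j+1)
        rw [← hMk1] at h
        linarith
      have hsub : ∫ x, x i1 ^ 2 * ((1 - sfun i0 i1 x) * sfun i0 i1 x ^ j) ∂μ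
          = Mk / 2 - Mk1 / 2 := by
        have hptw : ∀ x : EuclideanSpace ℝ (Fin N),
            x i1 ^ 2 * ((1 - sfun i0 i1 x) * sfun i0 i1 x ^ j)
            = x i1 ^ 2 * sfun i0 i1 x ^ j - x i1 ^ 2 * sfun i0 i1 x ^ (j+1) := by
          intro x; rw [pow_succ]; ring
        rw [integral_congr_ae (Filter.Eventually.of_forall hptw),
          integral_sub (int_coord_mul hae j i1) (int_coord_mul hae (j+1) i1), hJ1, hJ2]
      rw [← hsub, hs, ← hI3]
    push_cast
    linear_combination (2*((N:ℝ)-2)) * E1 - ((N:ℝ)-2) * E2 + 2 * E3 + (4*((j:ℝ)+1)) * E4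

lemma moment_closed (hae : ∀ᵐ x ∂μ, ‖x‖ = 1)
    (hinv : ∀ O : EuclideanSpace ℝ (Fin N) ≃ₗᵢ[ℝ] EuclideanSpace ℝ (Fin N),
      Measure.map (fun x => O x) μ = μ)
    (h01 : i0 ≠ i1) (h12 : i1 ≠ i2) (h20 : i2 ≠ i0) (p : ℕ) (hNp : N = 2 * p + 2) (k : ℕ) :
    ∫ x, sfun i0 i1 x ^ k ∂μ
      = (Nat.factorial k : ℝ) * Nat.factorial p / Nat.factorial (k + p) := by
  have hN : 2 ≤ N := by omega
  induction k with
  | zero =>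
    simp only [pow_zero, Nat.factorial_zero, Nat.cast_one, one_mul, Nat.zero_add]
    have h1 : ∫ _x, (1:ℝ) ∂μ = 1 := by simp
    rw [h1, eq_comm]
    exact div_self (by exact_mod_cast Nat.factorial_ne_zero p)
  | succ k ih =>
    have hrec := moment_rec hae hinv h01 h12 h20 hN k
    rw [ih] at hrec
    have hne : ((N:ℝ) + 2*k) ≠ 0 := by positivity
    have hfact : (((k + p).factorial : ℕ) : ℝ) ≠ 0 := by
      exact_mod_cast Nat.factorial_ne_zero _
    have hstep : (k + 1 + p) = (k + p) + 1 := by omega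
    apply mul_left_cancel₀ hne
    rw [hrec, hstep, Nat.factorial_succ, Nat.factorial_succ, hNp]
    push_cast
    field_simp
    ring

end MomentRec

/-- the Beta-type integral on `[0,2]` -/
lemma J_eval (m k : ℕ) : ∫ y in (0:ℝ)..2, y ^ k * (2 - y) ^ m
    = 2 ^ (k + m + 1) * Nat.factorial k * Nat.factorial m / Nat.factorial (k + m + 1) := by
  induction m generalizing k with
  | zero =>
    simp only [pow_zero, mul_one, Nat.factorial_zero, Nat.cast_one, Nat.add_zero]
    rw [integral_pow]
    have h1 : ((k+1).factorial : ℝ) = (k+1) * k.factorial := by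
      exact_mod_cast Nat.factorial_succ k
    rw [h1]
    have hk1 : ((k:ℝ) + 1) ≠ 0 := by positivity
    have hkf : (k.factorial : ℝ) ≠ 0 := by exact_mod_cast Nat.factorial_ne_zero k
    field_simp
    ring
  | succ m ih =>
    have key : ∫ y in (0:ℝ)..2,
        (((k:ℝ)+1) * y ^ k * (2 - y) ^ (m+1) - ((m:ℝ)+1) * y ^ (k+1) * (2 - y) ^ m) = 0 := by
      have hd : ∀ y ∈ Set.uIcc (0:ℝ) 2, HasDerivAt (fun y : ℝ => y ^ (k+1) * (2 - y) ^ (m+1))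
          (((k:ℝ)+1) * y ^ k * (2 - y) ^ (m+1) - ((m:ℝ)+1) * y ^ (k+1) * (2 - y) ^ m) y := by
        intro y _
        have h1 : HasDerivAt (fun y : ℝ => y ^ (k+1)) (((k:ℝ)+1) * y ^ k) y := by
          have := hasDerivAt_pow (k+1) y
          simpa using this
        have h2 : HasDerivAt (fun y : ℝ => (2 - y) ^ (m+1))
            (-(((m:ℝ)+1) * (2 - y) ^ m)) y := by
          have hb : HasDerivAt (fun y : ℝ => 2 - y) (-1) y := by
            simpa using (hasDerivAt_id y).const_sub 2
          have := hb.pow (m+1)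
          exact this.congr_deriv (by push_cast; ring)
        have h3 := h1.mul h2
        refine h3.congr_deriv ?_
        ring
      have hcont : IntervalIntegrable (fun y : ℝ =>
          ((k:ℝ)+1) * y ^ k * (2 - y) ^ (m+1) - ((m:ℝ)+1) * y ^ (k+1) * (2 - y) ^ m)
          MeasureTheory.volume 0 2 := by
        apply Continuous.intervalIntegrable
        continuity
      rw [intervalIntegral.integral_eq_sub_of_hasDerivAt hd hcont]
      norm_num
    have hint1 : IntervalIntegrable (fun y : ℝ => y ^ k * (2 - y) ^ (m+1))
        MeasureTheory.volume 0 2 := by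
      apply Continuous.intervalIntegrable; continuity
    have hint2 : IntervalIntegrable (fun y : ℝ => y ^ (k+1) * (2 - y) ^ m)
        MeasureTheory.volume 0 2 := by
      apply Continuous.intervalIntegrable; continuity
    have hsplit : ∫ y in (0:ℝ)..2,
        (((k:ℝ)+1) * y ^ k * (2 - y) ^ (m+1) - ((m:ℝ)+1) * y ^ (k+1) * (2 - y) ^ m)
        = ((k:ℝ)+1) * (∫ y in (0:ℝ)..2, y ^ k * (2 - y) ^ (m+1))
          - ((m:ℝ)+1) * ∫ y in (0:ℝ)..2, y ^ (k+1) * (2 - y) ^ m := by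
      have hptw : ∀ y : ℝ,
          ((k:ℝ)+1) * y ^ k * (2 - y) ^ (m+1) - ((m:ℝ)+1) * y ^ (k+1) * (2 - y) ^ m
          = ((k:ℝ)+1) * (y ^ k * (2 - y) ^ (m+1)) - ((m:ℝ)+1) * (y ^ (k+1) * (2 - y) ^ m) := by
        intro y; ring
      simp_rw [hptw]
      rw [intervalIntegral.integral_sub (hint1.const_mul _) (hint2.const_mul _),
        intervalIntegral.integral_const_mul, intervalIntegral.integral_const_mul]
    rw [hsplit] at key
    have hihk := ih (k+1)
    have hkne : ((k:ℝ)+1) ≠ 0 := by positivity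
    have heq : (∫ y in (0:ℝ)..2, y ^ k * (2 - y) ^ (m+1))
        = ((m:ℝ)+1) * (∫ y in (0:ℝ)..2, y ^ (k+1) * (2 - y) ^ m) / ((k:ℝ)+1) := by
      field_simp
      linarith [key]
    rw [heq, hihk]
    have e1 : (k + 1 + m + 1) = (k + (m+1) + 1) := by omega
    rw [e1]
    have e2 : ((k + (m+1) + 1).factorial : ℝ) ≠ 0 := by exact_mod_cast Nat.factorial_ne_zero _
    have e3 : (((m+1).factorial : ℕ) : ℝ) = ((m:ℝ)+1) * (m.factorial : ℝ) := by
      exact_mod_cast Nat.factorial_succ m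
    have e4 : (((k+1).factorial : ℕ) : ℝ) = ((k:ℝ)+1) * (k.factorial : ℝ) := by
      exact_mod_cast Nat.factorial_succ k
    rw [e3, e4]
    field_simp

section MomentExt

/-- a measure concentrated on `[0,2]` integrates every continuous function -/
lemma integrable_of_null_compl {ξ : Measure ℝ} [IsFiniteMeasure ξ]
    (hmem : ∀ᵐ y ∂ξ, y ∈ Set.Icc (0:ℝ) 2) {g : ℝ → ℝ} (hg : Continuous g) :
    Integrable g ξ := by
  obtain ⟨C, hC⟩ := isCompact_Icc.exists_bound_of_continuousOn hg.continuousOn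
  exact (integrable_const C).mono' hg.aestronglyMeasurable
    (hmem.mono fun y hy => hC y hy)

lemma integral_poly_eq {ξ₁ ξ₂ : Measure ℝ} [IsFiniteMeasure ξ₁] [IsFiniteMeasure ξ₂]
    (hmem₁ : ∀ᵐ y ∂ξ₁, y ∈ Set.Icc (0:ℝ) 2) (hmem₂ : ∀ᵐ y ∂ξ₂, y ∈ Set.Icc (0:ℝ) 2)
    (hmom : ∀ k : ℕ, ∫ y, y ^ k ∂ξ₁ = ∫ y, y ^ k ∂ξ₂) (P : Polynomial ℝ) :
    ∫ y, P.eval y ∂ξ₁ = ∫ y, P.eval y ∂ξ₂ := by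
  have hint : ∀ (ξ : Measure ℝ) [IsFiniteMeasure ξ], (∀ᵐ y ∂ξ, y ∈ Set.Icc (0:ℝ) 2) →
      ∀ i : ℕ, Integrable (fun y : ℝ => P.coeff i * y ^ i) ξ := by
    intro ξ _ hmem i
    exact (integrable_of_null_compl hmem (continuous_pow i)).const_mul _
  have h1 : ∫ y, P.eval y ∂ξ₁
      = ∑ i ∈ Finset.range (P.natDegree + 1), P.coeff i * ∫ y, y ^ i ∂ξ₁ := by
    rw [integral_congr_ae (Filter.Eventually.of_forall fun y => Polynomial.eval_eq_sum_range y),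
      integral_finset_sum _ (fun i _ => hint ξ₁ hmem₁ i)]
    simp_rw [MeasureTheory.integral_const_mul]
  have h2 : ∫ y, P.eval y ∂ξ₂
      = ∑ i ∈ Finset.range (P.natDegree + 1), P.coeff i * ∫ y, y ^ i ∂ξ₂ := by
    rw [integral_congr_ae (Filter.Eventually.of_forall fun y => Polynomial.eval_eq_sum_range y),
      integral_finset_sum _ (fun i _ => hint ξ₂ hmem₂ i)]
    simp_rw [MeasureTheory.integral_const_mul]
  rw [h1, h2]
  exact Finset.sum_congr rfl fun i _ => by rw [hmom i]

lemma integral_eq_of_moments {ξ₁ ξ₂ : Measure ℝ}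
    [IsProbabilityMeasure ξ₁] [IsProbabilityMeasure ξ₂]
    (hmem₁ : ∀ᵐ y ∂ξ₁, y ∈ Set.Icc (0:ℝ) 2) (hmem₂ : ∀ᵐ y ∂ξ₂, y ∈ Set.Icc (0:ℝ) 2)
    (hmom : ∀ k : ℕ, ∫ y, y ^ k ∂ξ₁ = ∫ y, y ^ k ∂ξ₂) {g : ℝ → ℝ} (hg : Continuous g) :
    ∫ y, g y ∂ξ₁ = ∫ y, g y ∂ξ₂ := by
  apply eq_of_forall_dist_le
  intro ε hε
  obtain ⟨P, hP⟩ := exists_polynomial_near_of_continuousOn 0 2 g hg.continuousOn (ε/2)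
    (by positivity)
  have hPcont : Continuous fun y : ℝ => P.eval y := P.continuous
  have key : ∀ (ξ : Measure ℝ) [IsProbabilityMeasure ξ], (∀ᵐ y ∂ξ, y ∈ Set.Icc (0:ℝ) 2) →
      |∫ y, g y ∂ξ - ∫ y, P.eval y ∂ξ| ≤ ε/2 := by
    intro ξ _ hmem
    rw [← integral_sub (integrable_of_null_compl hmem hg)
      (integrable_of_null_compl hmem hPcont)]
    have hb : ∀ᵐ y ∂ξ, ‖g y - P.eval y‖ ≤ ε/2 := hmem.mono fun y hy => by
      rw [Real.norm_eq_abs, abs_sub_comm]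
      exact le_of_lt (hP y hy)
    have := norm_integral_le_of_norm_le_const hb
    simpa [measure_univ] using this
  have h1 := key ξ₁ hmem₁
  have h2 := key ξ₂ hmem₂
  have h3 := integral_poly_eq hmem₁ hmem₂ hmom P
  rw [Real.dist_eq]
  have := abs_sub_le (∫ y, g y ∂ξ₁) (∫ y, P.eval y ∂ξ₁) (∫ y, g y ∂ξ₂)
  have h4 : |(∫ y, P.eval y ∂ξ₁) - ∫ y, g y ∂ξ₂| = |(∫ y, g y ∂ξ₂) - ∫ y, P.eval y ∂ξ₂| := by
    rw [h3, abs_sub_comm]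
  linarith [this, h1, h2, abs_sub_comm (∫ y, P.eval y ∂ξ₁) (∫ y, g y ∂ξ₂)]

end MomentExt

section Nu2

/-- real density for the Beta(1,q+1)-type distribution on [0,2] -/
noncomputable def dens (q : ℕ) (y : ℝ) : ℝ := (((q:ℝ)+1)/2^(q+1)) * (2-y)^q

lemma continuous_dens (q : ℕ) : Continuous (dens q) := by
  unfold dens
  fun_prop

lemma dens_nonneg {q : ℕ} {y : ℝ} (hy : y ∈ Set.Icc (0:ℝ) 2) : 0 ≤ dens q y := by
  have h2 : 0 ≤ 2 - y := by linarith [hy.2]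
  unfold dens
  positivity

/-- the target measure -/
noncomputable def nu2 (q : ℕ) : Measure ℝ :=
  MeasureTheory.volume.withDensity
    (fun y : ℝ => ENNReal.ofReal ((Set.Icc (0:ℝ) 2).indicator (dens q) y))

lemma nu2_eq_restrict (q : ℕ) : nu2 q
    = (MeasureTheory.volume.restrict (Set.Icc (0:ℝ) 2)).withDensity
        (fun y => ENNReal.ofReal (dens q y)) := by
  unfold nu2
  rw [← withDensity_indicator measurableSet_Icc]
  congr 1
  funext y
  by_cases hy : y ∈ Set.Icc (0:ℝ) 2
  · rw [Set.indicator_of_mem hy, Set.indicator_of_mem hy]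
  · rw [Set.indicator_of_notMem hy, Set.indicator_of_notMem hy, ENNReal.ofReal_zero]

lemma nu2_integral (q : ℕ) {g : ℝ → ℝ} (hg : Continuous g) :
    ∫ y, g y ∂(nu2 q) = ∫ y in (0:ℝ)..2, dens q y * g y := by
  rw [nu2_eq_restrict]
  have hmeas : Measurable fun y : ℝ => (dens q y).toNNReal :=
    (continuous_dens q).measurable.real_toNNReal
  have hcoe : (fun y : ℝ => ENNReal.ofReal (dens q y))
      = fun y : ℝ => (((dens q y).toNNReal : ℝ≥0) : ℝ≥0∞) := rfl
  rw [hcoe, integral_withDensity_eq_integral_smul hmeas g]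
  have hcong : ∫ y in Set.Icc (0:ℝ) 2, (dens q y).toNNReal • g y ∂MeasureTheory.volume
      = ∫ y in Set.Icc (0:ℝ) 2, dens q y * g y ∂MeasureTheory.volume := by
    refine setIntegral_congr_fun measurableSet_Icc (fun y hy => ?_)
    simp [NNReal.smul_def, Real.coe_toNNReal _ (dens_nonneg hy)]
  rw [hcong, integral_Icc_eq_integral_Ioc, ← intervalIntegral.integral_of_le (by norm_num)]

lemma nu2_moment (q k : ℕ) : ∫ y, y ^ k ∂(nu2 q)
    = 2 ^ k * (Nat.factorial k : ℝ) * Nat.factorial (q+1) / Nat.factorial (k+q+1) := by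
  rw [nu2_integral q (continuous_pow k)]
  have h1 : ∫ y in (0:ℝ)..2, dens q y * y ^ k
      = (((q:ℝ)+1)/2^(q+1)) * ∫ y in (0:ℝ)..2, y ^ k * (2-y) ^ q := by
    rw [← intervalIntegral.integral_const_mul]
    congr 1
    funext y
    unfold dens
    ring
  rw [h1, J_eval q k]
  have e2 : ((k + q + 1).factorial : ℝ) ≠ 0 := by exact_mod_cast Nat.factorial_ne_zero _
  have e3 : (((q+1).factorial : ℕ) : ℝ) = ((q:ℝ)+1) * (q.factorial : ℝ) := by
    exact_mod_cast Nat.factorial_succ q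
  rw [e3]
  have hpow : (2:ℝ) ^ (k + q + 1) = 2 ^ k * 2 ^ (q+1) := pow_add 2 k (q+1)
  rw [hpow]
  have h2 : (2:ℝ) ^ (q+1) ≠ 0 := by positivity
  field_simp

lemma nu2_isProbability (q : ℕ) : IsProbabilityMeasure (nu2 q) := by
  constructor
  rw [nu2_eq_restrict, withDensity_apply _ MeasurableSet.univ, Measure.restrict_restrict
    MeasurableSet.univ, Set.univ_inter]
  have hInt : IntegrableOn (dens q) (Set.Icc (0:ℝ) 2) MeasureTheory.volume :=
    (continuous_dens q).continuousOn.integrableOn_compact isCompact_Icc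
  have hnn : 0 ≤ᵐ[MeasureTheory.volume.restrict (Set.Icc (0:ℝ) 2)] dens q :=
    (ae_restrict_iff' measurableSet_Icc).mpr
      (Filter.Eventually.of_forall fun y hy => dens_nonneg hy)
  rw [← ofReal_integral_eq_lintegral_ofReal hInt hnn]
  have : ∫ y in Set.Icc (0:ℝ) 2, dens q y ∂MeasureTheory.volume = 1 := by
    rw [integral_Icc_eq_integral_Ioc, ← intervalIntegral.integral_of_le (by norm_num : (0:ℝ) ≤ 2)]
    have h1 : ∫ y in (0:ℝ)..2, dens q y
        = (((q:ℝ)+1)/2^(q+1)) * ∫ y in (0:ℝ)..2, y ^ 0 * (2-y) ^ q := by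
      rw [← intervalIntegral.integral_const_mul]
      congr 1
      funext y
      unfold dens
      ring
    rw [h1, J_eval q 0]
    have e2 : (((q+1).factorial : ℕ) : ℝ) = ((q:ℝ)+1) * (q.factorial : ℝ) := by
      exact_mod_cast Nat.factorial_succ q
    simp only [Nat.factorial_zero, Nat.cast_one, Nat.zero_add, zero_add]
    rw [e2]
    have h3 : (q.factorial : ℝ) ≠ 0 := by exact_mod_cast Nat.factorial_ne_zero q
    have h4 : (2:ℝ) ^ (q+1) ≠ 0 := by positivity
    have h5 : ((q:ℝ)+1) ≠ 0 := by positivity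
    field_simp
  rw [this, ENNReal.ofReal_one]

lemma nu2_null_compl (q : ℕ) : nu2 q (Set.Icc (0:ℝ) 2)ᶜ = 0 := by
  unfold nu2
  rw [withDensity_apply _ measurableSet_Icc.compl]
  rw [setLIntegral_congr_fun measurableSet_Icc.compl
    (fun y hy => ?_)]
  · exact lintegral_zero
  · rw [Set.indicator_of_notMem (by simpa using hy), ENNReal.ofReal_zero]

end Nu2

end EdgeArmAux

open MeasureTheory Real

/-- The pushforward of the uniform probability measure on the unit sphere in `ℝ^{2n}` under the
first-edgelength map `x ↦ 2(x₀²+x₁²)` is the Beta-type distribution on `[0,2]` with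
density `y ↦ ((n−1)/2^{n−1})·(2−y)^{n−2}`. -/
theorem edgelength_pdf_planar_arm (n : ℕ) (hn : 2 ≤ n)
    (μ : Measure (EuclideanSpace ℝ (Fin (2 * n)))) [IsProbabilityMeasure μ]
    (hsphere : μ (Metric.sphere (0 : EuclideanSpace ℝ (Fin (2 * n))) 1) = 1)
    (hinv : ∀ O : EuclideanSpace ℝ (Fin (2 * n)) ≃ₗᵢ[ℝ] EuclideanSpace ℝ (Fin (2 * n)),
      Measure.map (fun x => O x) μ = μ) :
    Measure.map
        (fun x : EuclideanSpace ℝ (Fin (2 * n)) =>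
          2 * ((x ⟨0, by omega⟩) ^ 2 + (x ⟨1, by omega⟩) ^ 2)) μ
      = MeasureTheory.volume.withDensity (fun y : ℝ => ENNReal.ofReal
          ((Set.Icc (0 : ℝ) 2).indicator
            (fun y => (((n : ℝ) - 1) / 2 ^ (n - 1)) * (2 - y) ^ (n - 2)) y)) := by
  classical
  obtain ⟨q, rfl⟩ : ∃ q, n = q + 2 := ⟨n - 2, by omega⟩
  set i0 : Fin (2*(q+2)) := ⟨0, by omega⟩ with hi0
  set i1 : Fin (2*(q+2)) := ⟨1, by omega⟩ with hi1
  set i2 : Fin (2*(q+2)) := ⟨2, by omega⟩ with hi2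
  have h01 : i0 ≠ i1 := by
    rw [hi0, hi1]
    simp [Fin.ext_iff]
  have h12 : i1 ≠ i2 := by
    rw [hi1, hi2]
    simp [Fin.ext_iff]
  have h20 : i2 ≠ i0 := by
    rw [hi2, hi0]
    simp [Fin.ext_iff]
  have hae : ∀ᵐ x ∂μ, ‖x‖ = 1 := EdgeArmAux.ae_norm_one hsphere
  -- rewrite the right-hand side as `nu2 q`
  have hfun : (fun y : ℝ => (((q+2:ℕ):ℝ)-1)/2^((q+2)-1) * (2-y)^((q+2)-2))
      = EdgeArmAux.dens q := by
    funext y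
    show (((q+2:ℕ):ℝ)-1)/2^(q+1) * (2-y)^q = EdgeArmAux.dens q y
    unfold EdgeArmAux.dens
    push_cast
    ring
  have hRHS : MeasureTheory.volume.withDensity (fun y : ℝ => ENNReal.ofReal
      ((Set.Icc (0:ℝ) 2).indicator
        (fun y => (((q+2:ℕ):ℝ)-1)/2^((q+2)-1) * (2-y)^((q+2)-2)) y))
      = EdgeArmAux.nu2 q := by
    unfold EdgeArmAux.nu2
    rw [hfun]
  rw [hRHS]
  -- rewrite the left-hand side map
  show Measure.map (fun x => 2 * EdgeArmAux.sfun i0 i1 x) μ = EdgeArmAux.nu2 q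
  set f : EuclideanSpace ℝ (Fin (2*(q+2))) → ℝ := fun x => 2 * EdgeArmAux.sfun i0 i1 x with hf
  have hfc : Continuous f := continuous_const.mul EdgeArmAux.continuous_sfun
  haveI hP1 : IsProbabilityMeasure (Measure.map f μ) :=
    Measure.isProbabilityMeasure_map hfc.aemeasurable
  haveI hP2 : IsProbabilityMeasure (EdgeArmAux.nu2 q) := EdgeArmAux.nu2_isProbability q
  -- null sets
  have h0 : μ {x : EuclideanSpace ℝ (Fin (2*(q+2))) | ¬ ‖x‖ = 1} = 0 := ae_iff.mp hae
  have hsle : ∀ x : EuclideanSpace ℝ (Fin (2*(q+2))), ‖x‖ = 1 →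
      EdgeArmAux.sfun i0 i1 x ≤ 1 := by
    intro x hx
    have hsum : x i0^2 + x i1^2 ≤ ∑ i, x i ^2 := by
      have hsub := Finset.sum_le_sum_of_subset_of_nonneg
        (Finset.subset_univ ({i0, i1} : Finset (Fin (2*(q+2)))))
        (fun i _ _ => sq_nonneg (x i))
      rwa [Finset.sum_pair h01] at hsub
    rw [← EdgeArmAux.norm_sq_eq, hx] at hsum
    unfold EdgeArmAux.sfun
    simpa using hsum
  have hmap_null : (Measure.map f μ) (Set.Icc (0:ℝ) 2)ᶜ = 0 := by
    rw [Measure.map_apply hfc.measurable measurableSet_Icc.compl]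
    refine measure_mono_null ?_ h0
    intro x hx
    simp only [Set.mem_preimage, Set.mem_compl_iff, Set.mem_Icc, Set.mem_setOf_eq] at hx ⊢
    intro hnorm
    apply hx
    have ha := EdgeArmAux.sfun_nonneg (i0 := i0) (i1 := i1) x
    have hb := hsle x hnorm
    constructor
    · show (0:ℝ) ≤ 2 * EdgeArmAux.sfun i0 i1 x
      linarith
    · show 2 * EdgeArmAux.sfun i0 i1 x ≤ 2
      linarith
  have hmem₁ : ∀ᵐ y ∂(Measure.map f μ), y ∈ Set.Icc (0:ℝ) 2 := by
    rw [ae_iff]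
    have : {y : ℝ | ¬ y ∈ Set.Icc (0:ℝ) 2} = (Set.Icc (0:ℝ) 2)ᶜ := rfl
    rw [this]
    exact hmap_null
  have hmem₂ : ∀ᵐ y ∂(EdgeArmAux.nu2 q), y ∈ Set.Icc (0:ℝ) 2 := by
    rw [ae_iff]
    have : {y : ℝ | ¬ y ∈ Set.Icc (0:ℝ) 2} = (Set.Icc (0:ℝ) 2)ᶜ := rfl
    rw [this]
    exact EdgeArmAux.nu2_null_compl q
  -- moments agree
  have hmom : ∀ k : ℕ, ∫ y, y ^ k ∂(Measure.map f μ) = ∫ y, y ^ k ∂(EdgeArmAux.nu2 q) := by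
    intro k
    rw [integral_map hfc.aemeasurable (continuous_pow k).aestronglyMeasurable]
    have hptw : ∀ x : EuclideanSpace ℝ (Fin (2*(q+2))), (f x) ^ k
        = 2 ^ k * EdgeArmAux.sfun i0 i1 x ^ k := by
      intro x
      show (2 * EdgeArmAux.sfun i0 i1 x) ^ k = 2 ^ k * EdgeArmAux.sfun i0 i1 x ^ k
      rw [mul_pow]
    rw [integral_congr_ae (Filter.Eventually.of_forall hptw), MeasureTheory.integral_const_mul,
      EdgeArmAux.moment_closed hae hinv h01 h12 h20 (q+1) (by ring) k,
      EdgeArmAux.nu2_moment q k]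
    have : k + (q + 1) = k + q + 1 := by omega
    rw [this]
    ring
  -- conclude by comparing integrals of bounded continuous functions
  refine ext_of_forall_lintegral_eq_of_IsFiniteMeasure ?_
  intro fb
  have hfRc : Continuous fun y : ℝ => (fb y : ℝ) := NNReal.continuous_coe.comp fb.continuous
  have hint₁ : Integrable (fun y : ℝ => (fb y : ℝ)) (Measure.map f μ) :=
    EdgeArmAux.integrable_of_null_compl hmem₁ hfRc
  have hint₂ : Integrable (fun y : ℝ => (fb y : ℝ)) (EdgeArmAux.nu2 q) :=
    EdgeArmAux.integrable_of_null_compl hmem₂ hfRc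
  rw [lintegral_coe_eq_integral fb hint₁, lintegral_coe_eq_integral fb hint₂,
    EdgeArmAux.integral_eq_of_moments hmem₁ hmem₂ hmom hfRc]
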